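/- Let p, q, r be distinct primes. An element y of Z/(pqr)Z is idempotent if and only if y is one of the eight elements 0, 1, (pq)^{r-1}, (pr)^{q-1}, (qr)^{p-1}, p^{(q-1)(r-1)}, q^{(p-1)(r-1)}, r^{(p-1)(q-1)} (all reduced modulo pqr). -/

import Mathlib

section aux

lemma zmod_comp_zero_iff {n s : ℕ} [NeZero n] [NeZero s] (hs : s ∣ n) (x : ZMod n) :
    ZMod.castHom hs (ZMod s) x = 0 ↔ s ∣ x.val := by
  have : ZMod.castHom hs (ZMod s) x = ((x.val : ℕ) : ZMod s) := by
    conv_lhs => rw [← ZMod.natCast_rightInverse x]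
    simp [map_natCast]
  rw [this, ZMod.natCast_eq_zero_iff]

lemma aux_inj {p q r : ℕ} (hp : p.Prime) (hq : q.Prime) (hr : r.Prime)
    (hpq : p ≠ q) (hpr : p ≠ r) (hqr : q ≠ r)
    (hpd : p ∣ p * q * r) (hqd : q ∣ p * q * r) (hrd : r ∣ p * q * r)
    (x z : ZMod (p * q * r))
    (h1 : ZMod.castHom hpd (ZMod p) x = ZMod.castHom hpd (ZMod p) z)
    (h2 : ZMod.castHom hqd (ZMod q) x = ZMod.castHom hqd (ZMod q) z)
    (h3 : ZMod.castHom hrd (ZMod r) x = ZMod.castHom hrd (ZMod r) z) : x = z := by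
  have hppos := hp.pos
  have hqpos := hq.pos
  have hrpos := hr.pos
  haveI : NeZero (p * q * r) := ⟨by positivity⟩
  haveI : NeZero p := ⟨hp.ne_zero⟩
  haveI : NeZero q := ⟨hq.ne_zero⟩
  haveI : NeZero r := ⟨hr.ne_zero⟩
  have key : x - z = 0 := by
    have h1' : p ∣ (x - z).val := (zmod_comp_zero_iff hpd _).mp (by rw [map_sub, h1, sub_self])
    have h2' : q ∣ (x - z).val := (zmod_comp_zero_iff hqd _).mp (by rw [map_sub, h2, sub_self])
    have h3' : r ∣ (x - z).val := (zmod_comp_zero_iff hrd _).mp (by rw [map_sub, h3, sub_self])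
    have cpq : Nat.Coprime p q := (Nat.coprime_primes hp hq).mpr hpq
    have cpr : Nat.Coprime (p * q) r := Nat.Coprime.mul
      ((Nat.coprime_primes hp hr).mpr hpr) ((Nat.coprime_primes hq hr).mpr hqr)
    have : p * q * r ∣ (x - z).val :=
      cpr.mul_dvd_of_dvd_of_dvd (cpq.mul_dvd_of_dvd_of_dvd h1' h2') h3'
    calc x - z = (((x - z).val : ℕ) : ZMod (p * q * r)) := (ZMod.natCast_rightInverse _).symm
      _ = 0 := (ZMod.natCast_eq_zero_iff _ _).mpr this
  exact sub_eq_zero.mp key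

end aux

theorem idempotents_zmod_pqr (p q r : ℕ) (hp : p.Prime) (hq : q.Prime) (hr : r.Prime)
    (hpq : p ≠ q) (hpr : p ≠ r) (hqr : q ≠ r) (y : ZMod (p * q * r)) :
    IsIdempotentElem y ↔
      y ∈ ({0, 1, ((p : ZMod (p * q * r)) * q) ^ (r - 1),
        ((p : ZMod (p * q * r)) * r) ^ (q - 1),
        ((q : ZMod (p * q * r)) * r) ^ (p - 1),
        (p : ZMod (p * q * r)) ^ ((q - 1) * (r - 1)),
        (q : ZMod (p * q * r)) ^ ((p - 1) * (r - 1)),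
        (r : ZMod (p * q * r)) ^ ((p - 1) * (q - 1))} : Set (ZMod (p * q * r))) := by
  haveI : Fact p.Prime := ⟨hp⟩
  haveI : Fact q.Prime := ⟨hq⟩
  haveI : Fact r.Prime := ⟨hr⟩
  have hpd : p ∣ p * q * r := ⟨q * r, by ring⟩
  have hqd : q ∣ p * q * r := ⟨p * r, by ring⟩
  have hrd : r ∣ p * q * r := ⟨p * q, by ring⟩
  set φp := ZMod.castHom hpd (ZMod p) with hφp
  set φq := ZMod.castHom hqd (ZMod q) with hφq
  set φr := ZMod.castHom hrd (ZMod r) with hφr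
  have inj := aux_inj hp hq hr hpq hpr hqr hpd hqd hrd
  have nz : ∀ (s t : ℕ) (_ : s.Prime) (ht : t.Prime), s ≠ t → (s : ZMod t) ≠ 0 := by
    intro s t hs ht hst h
    haveI : NeZero t := ⟨ht.ne_zero⟩
    rw [ZMod.natCast_eq_zero_iff] at h
    exact hst ((Nat.prime_dvd_prime_iff_eq ht hs).mp h).symm
  have hp1 : p - 1 ≠ 0 := by have := hp.two_le; omega
  have hq1 : q - 1 ≠ 0 := by have := hq.two_le; omega
  have hr1 : r - 1 ≠ 0 := by have := hr.two_le; omega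
  have fermat : ∀ (t : ℕ) [Fact t.Prime] (a : ZMod t), a ≠ 0 → a ^ (t - 1) = 1 := by
    intro t ht a ha; exact ZMod.pow_card_sub_one_eq_one ha
  have selfp : (p : ZMod p) = 0 := ZMod.natCast_self p
  have selfq : (q : ZMod q) = 0 := ZMod.natCast_self q
  have selfr : (r : ZMod r) = 0 := ZMod.natCast_self r
  -- component values of the six nontrivial candidates
  have c2p : φp (((p : ZMod (p*q*r)) * q) ^ (r - 1)) = 0 := by
    rw [map_pow, map_mul, map_natCast, selfp, zero_mul, zero_pow hr1]
  have c2q : φq (((p : ZMod (p*q*r)) * q) ^ (r - 1)) = 0 := by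
    rw [map_pow, map_mul, map_natCast, map_natCast, selfq, mul_zero, zero_pow hr1]
  have c2r : φr (((p : ZMod (p*q*r)) * q) ^ (r - 1)) = 1 := by
    rw [map_pow, map_mul, map_natCast, map_natCast]
    exact fermat r _ (mul_ne_zero (nz p r hp hr hpr) (nz q r hq hr hqr))
  have c3p : φp (((p : ZMod (p*q*r)) * r) ^ (q - 1)) = 0 := by
    rw [map_pow, map_mul, map_natCast, selfp, zero_mul, zero_pow hq1]
  have c3q : φq (((p : ZMod (p*q*r)) * r) ^ (q - 1)) = 1 := by
    rw [map_pow, map_mul, map_natCast, map_natCast]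
    exact fermat q _ (mul_ne_zero (nz p q hp hq hpq) (nz r q hr hq (Ne.symm hqr)))
  have c3r : φr (((p : ZMod (p*q*r)) * r) ^ (q - 1)) = 0 := by
    rw [map_pow, map_mul, map_natCast, map_natCast, selfr, mul_zero, zero_pow hq1]
  have c4p : φp (((q : ZMod (p*q*r)) * r) ^ (p - 1)) = 1 := by
    rw [map_pow, map_mul, map_natCast, map_natCast]
    exact fermat p _ (mul_ne_zero (nz q p hq hp (Ne.symm hpq)) (nz r p hr hp (Ne.symm hpr)))
  have c4q : φq (((q : ZMod (p*q*r)) * r) ^ (p - 1)) = 0 := by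
    rw [map_pow, map_mul, map_natCast, selfq, zero_mul, zero_pow hp1]
  have c4r : φr (((q : ZMod (p*q*r)) * r) ^ (p - 1)) = 0 := by
    rw [map_pow, map_mul, map_natCast, map_natCast, selfr, mul_zero, zero_pow hp1]
  have c5p : φp ((p : ZMod (p*q*r)) ^ ((q - 1) * (r - 1))) = 0 := by
    rw [map_pow, map_natCast, selfp, zero_pow (mul_ne_zero hq1 hr1)]
  have c5q : φq ((p : ZMod (p*q*r)) ^ ((q - 1) * (r - 1))) = 1 := by
    rw [map_pow, map_natCast, pow_mul, fermat q _ (nz p q hp hq hpq), one_pow]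
  have c5r : φr ((p : ZMod (p*q*r)) ^ ((q - 1) * (r - 1))) = 1 := by
    rw [map_pow, map_natCast, mul_comm (q - 1), pow_mul,
      fermat r _ (nz p r hp hr hpr), one_pow]
  have c6p : φp ((q : ZMod (p*q*r)) ^ ((p - 1) * (r - 1))) = 1 := by
    rw [map_pow, map_natCast, pow_mul, fermat p _ (nz q p hq hp (Ne.symm hpq)), one_pow]
  have c6q : φq ((q : ZMod (p*q*r)) ^ ((p - 1) * (r - 1))) = 0 := by
    rw [map_pow, map_natCast, selfq, zero_pow (mul_ne_zero hp1 hr1)]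
  have c6r : φr ((q : ZMod (p*q*r)) ^ ((p - 1) * (r - 1))) = 1 := by
    rw [map_pow, map_natCast, mul_comm (p - 1), pow_mul,
      fermat r _ (nz q r hq hr hqr), one_pow]
  have c7p : φp ((r : ZMod (p*q*r)) ^ ((p - 1) * (q - 1))) = 1 := by
    rw [map_pow, map_natCast, pow_mul, fermat p _ (nz r p hr hp (Ne.symm hpr)), one_pow]
  have c7q : φq ((r : ZMod (p*q*r)) ^ ((p - 1) * (q - 1))) = 1 := by
    rw [map_pow, map_natCast, mul_comm (p - 1), pow_mul,
      fermat q _ (nz r q hr hq (Ne.symm hqr)), one_pow]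
  have c7r : φr ((r : ZMod (p*q*r)) ^ ((p - 1) * (q - 1))) = 0 := by
    rw [map_pow, map_natCast, selfr, zero_pow (mul_ne_zero hp1 hq1)]
  constructor
  · intro hy
    have ha : φp y = 0 ∨ φp y = 1 := by
      rcases eq_or_ne (φp y) 0 with h0 | h0
      · exact Or.inl h0
      · exact Or.inr (mul_left_cancel₀ h0 (by simpa using congrArg φp hy))
    have hb : φq y = 0 ∨ φq y = 1 := by
      rcases eq_or_ne (φq y) 0 with h0 | h0
      · exact Or.inl h0
      · exact Or.inr (mul_left_cancel₀ h0 (by simpa using congrArg φq hy))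
    have hc : φr y = 0 ∨ φr y = 1 := by
      rcases eq_or_ne (φr y) 0 with h0 | h0
      · exact Or.inl h0
      · exact Or.inr (mul_left_cancel₀ h0 (by simpa using congrArg φr hy))
    simp only [Set.mem_insert_iff, Set.mem_singleton_iff]
    rcases ha with ha | ha <;> rcases hb with hb | hb <;> rcases hc with hc | hc
    · exact Or.inl (inj y 0 (by rw [ha, map_zero]) (by rw [hb, map_zero]) (by rw [hc, map_zero]))
    · exact Or.inr (Or.inr (Or.inl (inj y _ (by rw [ha, c2p]) (by rw [hb, c2q]) (by rw [hc, c2r]))))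
    · exact Or.inr (Or.inr (Or.inr (Or.inl
        (inj y _ (by rw [ha, c3p]) (by rw [hb, c3q]) (by rw [hc, c3r])))))
    · exact Or.inr (Or.inr (Or.inr (Or.inr (Or.inr (Or.inl
        (inj y _ (by rw [ha, c5p]) (by rw [hb, c5q]) (by rw [hc, c5r])))))))
    · exact Or.inr (Or.inr (Or.inr (Or.inr (Or.inl
        (inj y _ (by rw [ha, c4p]) (by rw [hb, c4q]) (by rw [hc, c4r]))))))
    · exact Or.inr (Or.inr (Or.inr (Or.inr (Or.inr (Or.inr (Or.inl
        (inj y _ (by rw [ha, c6p]) (by rw [hb, c6q]) (by rw [hc, c6r]))))))))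
    · exact Or.inr (Or.inr (Or.inr (Or.inr (Or.inr (Or.inr (Or.inr
        (inj y _ (by rw [ha, c7p]) (by rw [hb, c7q]) (by rw [hc, c7r]))))))))
    · exact Or.inr (Or.inl (inj y 1 (by rw [ha, map_one]) (by rw [hb, map_one]) (by rw [hc, map_one])))
  · intro hy
    have idem : ∀ z : ZMod (p * q * r),
        (φp z = 0 ∨ φp z = 1) → (φq z = 0 ∨ φq z = 1) → (φr z = 0 ∨ φr z = 1) →
        IsIdempotentElem z := by
      intro z h1 h2 h3
      refine inj (z * z) z ?_ ?_ ?_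
      · rcases h1 with h | h <;> simp only [map_mul, ← hφp, h, mul_zero, mul_one]
      · rcases h2 with h | h <;> simp only [map_mul, ← hφq, h, mul_zero, mul_one]
      · rcases h3 with h | h <;> simp only [map_mul, ← hφr, h, mul_zero, mul_one]
    simp only [Set.mem_insert_iff, Set.mem_singleton_iff] at hy
    rcases hy with h | h | h | h | h | h | h | h <;> subst h
    · exact idem 0 (Or.inl (map_zero _)) (Or.inl (map_zero _)) (Or.inl (map_zero _))
    · exact idem 1 (Or.inr (map_one _)) (Or.inr (map_one _)) (Or.inr (map_one _))
    · exact idem _ (Or.inl c2p) (Or.inl c2q) (Or.inr c2r)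
    · exact idem _ (Or.inl c3p) (Or.inr c3q) (Or.inl c3r)
    · exact idem _ (Or.inr c4p) (Or.inl c4q) (Or.inl c4r)
    · exact idem _ (Or.inl c5p) (Or.inr c5q) (Or.inr c5r)
    · exact idem _ (Or.inr c6p) (Or.inl c6q) (Or.inr c6r)
    · exact idem _ (Or.inr c7p) (Or.inr c7q) (Or.inl c7r)
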